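/- Let m₀ ∈ (0,1) be the unique root of m ↦ 2E(m) − K(m). The function f(m) := 2(2E(m) − K(m))·√(4m−2) on (1/2, 1) satisfies f(1/2) = 0, f(m₀) = 0, and f restricted to [m₀, 1) is a strictly decreasing bijection onto (−∞, 0]. -/

import Mathlib

open Real Set Filter Topology MeasureTheory intervalIntegral

noncomputable def ellK (m : ℝ) : ℝ :=
  ∫ θ in (0:ℝ)..(π / 2), 1 / Real.sqrt (1 - m * Real.sin θ ^ 2)

noncomputable def ellE (m : ℝ) : ℝ :=
  ∫ θ in (0:ℝ)..(π / 2), Real.sqrt (1 - m * Real.sin θ ^ 2)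

lemma base_lb {m : ℝ} (hm0 : 0 ≤ m) (θ : ℝ) : 1 - m ≤ 1 - m * Real.sin θ ^ 2 := by
  nlinarith [Real.sin_sq_le_one θ, sq_nonneg (Real.sin θ)]

lemma base_pos {m : ℝ} (hm0 : 0 ≤ m) (hm1 : m < 1) (θ : ℝ) : 0 < 1 - m * Real.sin θ ^ 2 :=
  lt_of_lt_of_le (by linarith) (base_lb hm0 θ)

lemma contE {m : ℝ} : Continuous (fun θ => Real.sqrt (1 - m * Real.sin θ ^ 2)) :=
  (Real.continuous_sqrt.comp (by continuity))

lemma contK {m : ℝ} (hm0 : 0 ≤ m) (hm1 : m < 1) :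
    Continuous (fun θ => 1 / Real.sqrt (1 - m * Real.sin θ ^ 2)) := by
  apply continuous_const.div contE
  intro θ
  exact (Real.sqrt_pos.mpr (base_pos hm0 hm1 θ)).ne'

lemma intE {m : ℝ} : IntervalIntegrable (fun θ => Real.sqrt (1 - m * Real.sin θ ^ 2))
    volume 0 (π/2) := contE.intervalIntegrable _ _

lemma intK {m : ℝ} (hm0 : 0 ≤ m) (hm1 : m < 1) :
    IntervalIntegrable (fun θ => 1 / Real.sqrt (1 - m * Real.sin θ ^ 2)) volume 0 (π/2) :=
  (contK hm0 hm1).intervalIntegrable _ _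

lemma gg_eq {m : ℝ} (hm0 : 0 ≤ m) (hm1 : m < 1) :
    2 * ellE m - ellK m = ∫ θ in (0:ℝ)..(π/2),
      (2 * Real.sqrt (1 - m * Real.sin θ ^ 2) - 1 / Real.sqrt (1 - m * Real.sin θ ^ 2)) := by
  rw [ellE, ellK, ← intervalIntegral.integral_const_mul,
    ← intervalIntegral.integral_sub (intE.const_mul 2) (intK hm0 hm1)]

-- ψ monotone: for 0 < u ≤ v, 2√u - 1/√u ≤ 2√v - 1/√v, strict if u < v
lemma psi_le {u v : ℝ} (hu : 0 < u) (huv : u ≤ v) :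
    2 * Real.sqrt u - 1 / Real.sqrt u ≤ 2 * Real.sqrt v - 1 / Real.sqrt v := by
  have h1 : Real.sqrt u ≤ Real.sqrt v := Real.sqrt_le_sqrt huv
  have h2 : 0 < Real.sqrt u := Real.sqrt_pos.mpr hu
  have h3 : 1 / Real.sqrt v ≤ 1 / Real.sqrt u := by
    apply one_div_le_one_div_of_le h2 h1
  linarith

lemma psi_lt {u v : ℝ} (hu : 0 < u) (huv : u < v) :
    2 * Real.sqrt u - 1 / Real.sqrt u < 2 * Real.sqrt v - 1 / Real.sqrt v := by
  have h1 : Real.sqrt u < Real.sqrt v := Real.sqrt_lt_sqrt hu.le huv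
  have h2 : 0 < Real.sqrt u := Real.sqrt_pos.mpr hu
  have h3 : 1 / Real.sqrt v ≤ 1 / Real.sqrt u := one_div_le_one_div_of_le h2 h1.le
  linarith

lemma gg_anti : StrictAntiOn (fun m => 2 * ellE m - ellK m) (Set.Ico 0 1) := by
  rintro a ⟨ha0, ha1⟩ b ⟨hb0, hb1⟩ hab
  simp only
  rw [gg_eq ha0 ha1, gg_eq hb0 hb1]
  apply intervalIntegral.integral_lt_integral_of_continuousOn_of_le_of_exists_lt
    (by positivity)
  · exact ((continuous_const.mul contE).sub (contK hb0 hb1)).continuousOn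
  · exact ((continuous_const.mul contE).sub (contK ha0 ha1)).continuousOn
  · intro θ _
    apply psi_le (base_pos hb0 hb1 θ)
    nlinarith [sq_nonneg (Real.sin θ)]
  · refine ⟨π/2, ⟨by positivity, le_refl _⟩, ?_⟩
    apply psi_lt (base_pos hb0 hb1 (π/2))
    rw [Real.sin_pi_div_two]
    nlinarith

lemma gg_half_pos : 0 < 2 * ellE (1/2) - ellK (1/2) := by
  have h0 : (0:ℝ) ≤ 1/2 := by norm_num
  have h1 : (1/2:ℝ) < 1 := by norm_num
  rw [gg_eq h0 h1]
  have key : ∀ θ ∈ Set.Icc (0:ℝ) (π/2), Real.cos θ ^ 2 ≤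
      2 * Real.sqrt (1 - 1/2 * Real.sin θ ^ 2) - 1 / Real.sqrt (1 - 1/2 * Real.sin θ ^ 2) := by
    intro θ _
    set u := 1 - 1/2 * Real.sin θ ^ 2 with hu
    have hupos : 0 < u := base_pos h0 h1 θ
    have hu1 : u ≤ 1 := by rw [hu]; nlinarith [sq_nonneg (Real.sin θ)]
    have huh : 1/2 ≤ u := by rw [hu]; nlinarith [Real.sin_sq_le_one θ]
    have hcos : Real.cos θ ^ 2 = 2 * u - 1 := by
      have := Real.sin_sq_add_cos_sq θ
      rw [hu]; linarith
    rw [hcos]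
    set s := Real.sqrt u with hs
    have hs2 : s ^ 2 = u := Real.sq_sqrt hupos.le
    have hspos : 0 < s := Real.sqrt_pos.mpr hupos
    have hs1 : s ≤ 1 := by
      rw [show (1:ℝ) = Real.sqrt 1 from (Real.sqrt_one).symm]
      exact Real.sqrt_le_sqrt hu1
    have hkey : (2*s^2 - 1) * (1 - s) ≥ 0 := by
      apply mul_nonneg <;> nlinarith
    have hmul : (2*u - 1) * s ≤ (2*s - 1/s) * s := by
      have h1s : (1/s) * s = 1 := one_div_mul_cancel hspos.ne'
      rw [sub_mul, sub_mul, h1s]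
      nlinarith [hkey]
    exact le_of_mul_le_mul_right hmul hspos
  have hmono : (∫ θ in (0:ℝ)..(π/2), Real.cos θ ^ 2) ≤ ∫ θ in (0:ℝ)..(π/2),
      (2 * Real.sqrt (1 - 1/2 * Real.sin θ ^ 2) - 1 / Real.sqrt (1 - 1/2 * Real.sin θ ^ 2)) := by
    apply intervalIntegral.integral_mono_on (by positivity)
    · exact (Real.continuous_cos.pow 2).intervalIntegrable _ _
    · exact ((continuous_const.mul (contE (m := 1/2))).sub (contK h0 h1)).intervalIntegrable _ _
    · exact key
  have hcos2 : (∫ θ in (0:ℝ)..(π/2), Real.cos θ ^ 2) = π/4 := by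
    rw [integral_cos_sq]
    simp [Real.cos_pi_div_two]
    ring
  rw [hcos2] at hmono
  linarith [Real.pi_pos]

-- continuity of ellE and ellK on Icc 0 b for b < 1
lemma ell_cont {b : ℝ} (hb : b < 1) :
    ContinuousOn (fun m => 2 * ellE m - ellK m) (Set.Icc 0 b) := by
  have hbase : ∀ m ∈ Set.Icc (0:ℝ) b, ∀ θ : ℝ, 1 - b ≤ 1 - m * Real.sin θ ^ 2 := by
    rintro m ⟨hm0, hmb⟩ θ
    have := base_lb hm0 θ
    linarith
  have hb0 : (0:ℝ) < 1 - b := by linarith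
  apply ContinuousOn.sub
  · apply continuousOn_const.mul
    intro x₀ hx₀
    unfold ellE
    apply intervalIntegral.continuousWithinAt_of_dominated_interval
      (bound := fun _ => (1:ℝ))
    · filter_upwards [self_mem_nhdsWithin] with m hm
      exact contE.aestronglyMeasurable
    · filter_upwards [self_mem_nhdsWithin] with m hm
      filter_upwards with θ _
      rw [Real.norm_eq_abs, abs_of_nonneg (Real.sqrt_nonneg _)]
      rw [Real.sqrt_le_one]
      nlinarith [hm.1, sq_nonneg (Real.sin θ)]
    · exact intervalIntegrable_const
    · filter_upwards with θ _
      exact (Real.continuous_sqrt.comp (by continuity)).continuousWithinAt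
  · intro x₀ hx₀
    unfold ellK
    apply intervalIntegral.continuousWithinAt_of_dominated_interval
      (bound := fun _ => 1 / Real.sqrt (1 - b))
    · filter_upwards [self_mem_nhdsWithin] with m hm
      exact (contK hm.1 (lt_of_le_of_lt hm.2 hb)).aestronglyMeasurable
    · filter_upwards [self_mem_nhdsWithin] with m hm
      filter_upwards with θ _
      have h1 : 0 < 1 - m * Real.sin θ ^ 2 := base_pos hm.1 (lt_of_le_of_lt hm.2 hb) θ
      rw [Real.norm_eq_abs, abs_of_nonneg (by positivity)]
      apply one_div_le_one_div_of_le (Real.sqrt_pos.mpr hb0)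
      exact Real.sqrt_le_sqrt (hbase m hm θ)
    · exact intervalIntegrable_const
    · filter_upwards with θ _
      apply ContinuousWithinAt.div continuousWithinAt_const
      · exact (Real.continuous_sqrt.comp (by continuity)).continuousWithinAt
      · have h1 : 0 < 1 - x₀ * Real.sin θ ^ 2 := base_pos hx₀.1 (lt_of_le_of_lt hx₀.2 hb) θ
        exact (Real.sqrt_pos.mpr h1).ne'

lemma cont_inv_lin {c : ℝ} (hc : 0 < c) :
    ContinuousOn (fun θ => 1/(c + π/2 - θ)) (Set.Icc (0:ℝ) (π/2)) := by
  apply continuousOn_const.div (by fun_prop)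
  rintro θ ⟨_, hθ2⟩
  have : 0 < c + π/2 - θ := by linarith
  exact this.ne'

lemma logint {c : ℝ} (hc : 0 < c) :
    (∫ θ in (0:ℝ)..(π/2), 1/(c + π/2 - θ)) = Real.log (c + π/2) - Real.log c := by
  have hpi := Real.pi_pos
  have h02 : (0:ℝ) ≤ π/2 := by positivity
  have key : ∀ θ ∈ Set.uIcc (0:ℝ) (π/2),
      HasDerivAt (fun t => -Real.log (c + π/2 - t)) (1/(c + π/2 - θ)) θ := by
    intro θ hθ
    rw [Set.uIcc_of_le h02] at hθ
    have hpos : 0 < c + π/2 - θ := by have := hθ.2; linarith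
    have hg : HasDerivAt (fun t : ℝ => c + π/2 - t) (-1) θ := by
      simpa using (hasDerivAt_id θ).const_sub (c + π/2)
    have hl := ((Real.hasDerivAt_log hpos.ne').comp θ hg).neg
    rw [show (1/(c + π/2 - θ)) = -((c + π/2 - θ)⁻¹ * -1) by ring]
    exact hl
  have hint : IntervalIntegrable (fun θ => 1/(c + π/2 - θ)) volume 0 (π/2) := by
    apply ContinuousOn.intervalIntegrable
    rw [Set.uIcc_of_le h02]
    exact cont_inv_lin hc
  have := intervalIntegral.integral_eq_sub_of_hasDerivAt key hint
  rw [this]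
  have h1 : c + π/2 - π/2 = c := by ring
  rw [h1]
  ring

lemma ellK_lb {m : ℝ} (hm0 : 0 ≤ m) (hm1 : m < 1) :
    Real.log (Real.sqrt (1-m) + π/2) - Real.log (Real.sqrt (1-m)) ≤ ellK m := by
  have hpi := Real.pi_pos
  have h02 : (0:ℝ) ≤ π/2 := by positivity
  set c := Real.sqrt (1-m) with hc
  have hcpos : 0 < c := Real.sqrt_pos.mpr (by linarith)
  have hcsq : c^2 = 1 - m := Real.sq_sqrt (by linarith)
  have key : ∀ θ ∈ Set.Icc (0:ℝ) (π/2),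
      1/(c + π/2 - θ) ≤ 1 / Real.sqrt (1 - m * Real.sin θ ^ 2) := by
    rintro θ ⟨hθ1, hθ2⟩
    have ht0 : 0 ≤ π/2 - θ := by linarith
    have hcosle : Real.cos θ ≤ π/2 - θ := by
      rw [← Real.sin_pi_div_two_sub θ]
      exact Real.sin_le ht0
    have hcosnn : 0 ≤ Real.cos θ := by
      apply Real.cos_nonneg_of_mem_Icc
      constructor <;> linarith
    have hsc := Real.sin_sq_add_cos_sq θ
    have hle : 1 - m * Real.sin θ ^ 2 ≤ (c + (π/2 - θ))^2 := by
      have h1 : 1 - m * Real.sin θ ^ 2 = (1 - m) + m * Real.cos θ ^ 2 := by nlinarith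
      have h2 : m * Real.cos θ ^ 2 ≤ Real.cos θ ^ 2 := by nlinarith [sq_nonneg (Real.cos θ)]
      have h3 : Real.cos θ ^ 2 ≤ (π/2 - θ)^2 := by nlinarith
      nlinarith [mul_nonneg hcpos.le ht0]
    have hsqle : Real.sqrt (1 - m * Real.sin θ ^ 2) ≤ c + π/2 - θ := by
      have := Real.sqrt_le_sqrt hle
      rwa [Real.sqrt_sq (by linarith), show c + (π/2 - θ) = c + π/2 - θ by ring] at this
    apply one_div_le_one_div_of_le (Real.sqrt_pos.mpr (base_pos hm0 hm1 θ)) hsqle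
  have hmono : (∫ θ in (0:ℝ)..(π/2), 1/(c + π/2 - θ)) ≤
      ∫ θ in (0:ℝ)..(π/2), 1 / Real.sqrt (1 - m * Real.sin θ ^ 2) := by
    apply intervalIntegral.integral_mono_on h02
    · apply ContinuousOn.intervalIntegrable
      rw [Set.uIcc_of_le h02]
      exact cont_inv_lin hcpos
    · exact (contK hm0 hm1).intervalIntegrable _ _
    · exact key
  rw [logint hcpos] at hmono
  exact hmono

lemma ellE_ub {m : ℝ} (hm0 : 0 ≤ m) : ellE m ≤ π/2 := by
  have hpi := Real.pi_pos
  have h02 : (0:ℝ) ≤ π/2 := by positivity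
  have : ellE m ≤ ∫ _ in (0:ℝ)..(π/2), (1:ℝ) := by
    apply intervalIntegral.integral_mono_on h02
      (contE.intervalIntegrable _ _) intervalIntegrable_const
    intro θ _
    rw [Real.sqrt_le_one]
    nlinarith [sq_nonneg (Real.sin θ), hm0]
  simpa using this

lemma gg_tendsto : Tendsto (fun m => 2 * ellE m - ellK m) (𝓝[<] (1:ℝ)) atBot := by
  have hpi := Real.pi_pos
  have hbd : Tendsto (fun m : ℝ => π - Real.log (π/2) + Real.log (1-m) / 2) (𝓝[<] (1:ℝ)) atBot := by
    have h1 : Tendsto (fun m : ℝ => 1 - m) (𝓝[<] (1:ℝ)) (𝓝[>] (0:ℝ)) := by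
      apply tendsto_nhdsWithin_of_tendsto_nhds_of_eventually_within
      · have hco : Continuous (fun m : ℝ => 1 - m) := by continuity
        have : Tendsto (fun m : ℝ => 1 - m) (𝓝 (1:ℝ)) (𝓝 0) := by
          simpa using hco.tendsto (1:ℝ)
        exact this.mono_left nhdsWithin_le_nhds
      · filter_upwards [self_mem_nhdsWithin] with m hm
        simp only [Set.mem_Iio] at hm
        simp [Set.mem_Ioi]; linarith
    have h2 : Tendsto (fun m : ℝ => Real.log (1-m)) (𝓝[<] (1:ℝ)) atBot :=
      Real.tendsto_log_nhdsGT_zero.comp h1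
    have h3 : Tendsto (fun m : ℝ => Real.log (1-m) / 2) (𝓝[<] (1:ℝ)) atBot :=
      h2.atBot_div_const (by norm_num)
    exact tendsto_atBot_add_const_left _ _ h3
  apply tendsto_atBot_mono' (𝓝[<] (1:ℝ)) ?_ hbd
  · have hmem : Set.Ioo (0:ℝ) 1 ∈ 𝓝[<] (1:ℝ) := by
      apply Ioo_mem_nhdsLT_of_mem
      constructor <;> norm_num
    filter_upwards [hmem] with m hm
    have hm0 : (0:ℝ) ≤ m := hm.1.le
    have hm1 : m < 1 := hm.2
    have h1 := ellK_lb hm0 hm1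
    have h2 := ellE_ub hm0
    have h3 : Real.log (π/2) ≤ Real.log (Real.sqrt (1-m) + π/2) := by
      apply Real.log_le_log (by positivity)
      nlinarith [Real.sqrt_nonneg (1-m)]
    have h4 : Real.log (Real.sqrt (1-m)) = Real.log (1-m) / 2 := Real.log_sqrt (by linarith)
    linarith

theorem wavelike_f_on_supercritical (m₀ : ℝ) (hm₀ : m₀ ∈ Set.Ioo (0:ℝ) 1)
    (hroot : 2 * ellE m₀ - ellK m₀ = 0)
    (huniq : ∀ m ∈ Set.Ioo (0:ℝ) 1, 2 * ellE m - ellK m = 0 → m = m₀) :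
    2 * (2 * ellE (1 / 2) - ellK (1 / 2)) * Real.sqrt (4 * (1 / 2) - 2) = 0 ∧
    2 * (2 * ellE m₀ - ellK m₀) * Real.sqrt (4 * m₀ - 2) = 0 ∧
    StrictAntiOn (fun m => 2 * (2 * ellE m - ellK m) * Real.sqrt (4 * m - 2))
      (Set.Ico m₀ 1) ∧
    Set.BijOn (fun m => 2 * (2 * ellE m - ellK m) * Real.sqrt (4 * m - 2))
      (Set.Ico m₀ 1) (Set.Iic (0:ℝ)) := by
  obtain ⟨hm₀0, hm₀1⟩ := hm₀
  have hhalf : (1:ℝ)/2 < m₀ := by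
    by_contra h
    push_neg at h
    rcases h.lt_or_eq with hlt | heq
    · have h1 := gg_anti ⟨hm₀0.le, hm₀1⟩ ⟨by norm_num, by norm_num⟩ hlt
      simp only at h1
      rw [hroot] at h1
      linarith [gg_half_pos]
    · rw [heq] at hroot
      linarith [gg_half_pos]
  -- gg nonpositive on Ico m₀ 1, negative above m₀
  have hggle : ∀ m ∈ Set.Ico m₀ 1, 2 * ellE m - ellK m ≤ 0 := by
    rintro m ⟨hm1, hm2⟩
    rcases hm1.lt_or_eq with hlt | heq
    · have := gg_anti ⟨hm₀0.le, hm₀1⟩ ⟨by linarith, hm2⟩ hlt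
      simp only at this
      rw [hroot] at this
      exact this.le
    · rw [← heq, hroot]
  have hw : ∀ m : ℝ, m₀ ≤ m → 0 < Real.sqrt (4 * m - 2) := by
    intro m hm
    apply Real.sqrt_pos.mpr
    linarith
  -- strict antitonicity of f
  have hanti : StrictAntiOn (fun m => 2 * (2 * ellE m - ellK m) * Real.sqrt (4 * m - 2))
      (Set.Ico m₀ 1) := by
    rintro a ha b hb hab
    simp only
    have hgab : 2 * ellE b - ellK b < 2 * ellE a - ellK a :=
      gg_anti ⟨by linarith [ha.1], ha.2⟩ ⟨by linarith [hb.1], hb.2⟩ hab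
    have hga : 2 * ellE a - ellK a ≤ 0 := hggle a ha
    have hwa : 0 < Real.sqrt (4 * a - 2) := hw a ha.1
    have hwb : 0 < Real.sqrt (4 * b - 2) := hw b hb.1
    have hwab : Real.sqrt (4 * a - 2) ≤ Real.sqrt (4 * b - 2) :=
      Real.sqrt_le_sqrt (by linarith)
    nlinarith
  have hfm₀ : 2 * (2 * ellE m₀ - ellK m₀) * Real.sqrt (4 * m₀ - 2) = 0 := by
    rw [hroot]; ring
  refine ⟨?_, hfm₀, hanti, ?_⟩
  · have h0 : (4:ℝ) * (1/2) - 2 = 0 := by norm_num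
    rw [h0, Real.sqrt_zero, mul_zero]
  -- BijOn
  have hm₀mem : m₀ ∈ Set.Ico m₀ 1 := ⟨le_refl _, hm₀1⟩
  constructor
  · -- MapsTo
    rintro m hm
    rcases hm.1.lt_or_eq with hlt | heq
    · have := hanti hm₀mem hm hlt
      simp only at this
      rw [hfm₀] at this
      exact this.le
    · have hfeq : (fun m => 2 * (2 * ellE m - ellK m) * Real.sqrt (4 * m - 2)) m = 0 := by
        rw [← heq]; simpa using hfm₀
      simp only [Set.mem_Iic, hfeq]; exact le_rfl
  constructor
  · exact hanti.injOn
  · -- SurjOn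
    intro y hy
    rcases (Set.mem_Iic.mp hy).lt_or_eq with hylt | hyeq
    swap
    · exact ⟨m₀, hm₀mem, by rw [hyeq]; exact hfm₀⟩
    -- f tends to -infinity
    have hftb : Tendsto (fun m => 2 * (2 * ellE m - ellK m) * Real.sqrt (4 * m - 2))
        (𝓝[<] (1:ℝ)) atBot := by
      have htb : Tendsto (fun m => 2 * (2 * ellE m - ellK m) * Real.sqrt (4 * m₀ - 2))
          (𝓝[<] (1:ℝ)) atBot :=
        (gg_tendsto.const_mul_atBot (show (0:ℝ) < 2 by norm_num)).atBot_mul_const (hw m₀ le_rfl)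
      apply tendsto_atBot_mono' (𝓝[<] (1:ℝ)) ?_ htb
      have hmem : Set.Ioo m₀ 1 ∈ 𝓝[<] (1:ℝ) := Ioo_mem_nhdsLT_of_mem ⟨hm₀1, le_rfl⟩
      filter_upwards [hmem] with m hm
      have hg : 2 * ellE m - ellK m ≤ 0 := hggle m ⟨hm.1.le, hm.2⟩
      have hwab : Real.sqrt (4 * m₀ - 2) ≤ Real.sqrt (4 * m - 2) :=
        Real.sqrt_le_sqrt (by linarith [hm.1])
      nlinarith [hw m₀ le_rfl]
    have hev : ∀ᶠ m in 𝓝[<] (1:ℝ),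
        2 * (2 * ellE m - ellK m) * Real.sqrt (4 * m - 2) < y :=
      hftb.eventually (eventually_lt_atBot y)
    have hmem : Set.Ioo m₀ 1 ∈ 𝓝[<] (1:ℝ) := Ioo_mem_nhdsLT_of_mem ⟨hm₀1, le_rfl⟩
    obtain ⟨b, hby, hbmem⟩ := (hev.and (eventually_of_mem hmem (fun x hx => hx))).exists
    -- IVT on [m₀, b]
    have hcont : ContinuousOn (fun m => 2 * (2 * ellE m - ellK m) * Real.sqrt (4 * m - 2))
        (Set.Icc m₀ b) := by
      apply ContinuousOn.mul
      · exact continuousOn_const.mul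
          (((ell_cont hbmem.2).mono (Set.Icc_subset_Icc_left hm₀0.le)))
      · exact (Continuous.sqrt (by fun_prop)).continuousOn
    have hivt := intermediate_value_Icc' (le_of_lt hbmem.1) hcont
    have hymem : y ∈ Set.Icc (2 * (2 * ellE b - ellK b) * Real.sqrt (4 * b - 2))
        (2 * (2 * ellE m₀ - ellK m₀) * Real.sqrt (4 * m₀ - 2)) := by
      rw [hfm₀]
      exact ⟨hby.le, hylt.le⟩
    obtain ⟨x, hx, hfx⟩ := hivt hymem
    exact ⟨x, ⟨hx.1, lt_of_le_of_lt hx.2 hbmem.2⟩, hfx⟩
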